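/- Let k ≥ 2 and ℓ ≥ 1. Let d(i) and u(i) be periodic integer sequences with period lengths ℓ and kℓ respectively, and let r, s be nonnegative integers with r − s + k − 1 ≥ 0. Let w(i) be an integer sequence such that for all 0 ≤ m ≤ k−1 and all i ≥ 0: w(ki + r + m) = u(ki + m) if 0 ≤ m ≤ k−2, and w(ki + r + k − 1) = w(i + s) + d(i). Then the sequence w is k-regular, i.e., the ℚ-vector space spanned by its k-kernel is finite-dimensional. -/

import Mathlib

/-- The k-kernel of an integer sequence, viewed inside the ℚ-vector space ℕ → ℚ. -/
def kKernel (k : ℕ) (w : ℕ → ℤ) : Set (ℕ → ℚ) :=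
  {f | ∃ e j : ℕ, j < k ^ e ∧ f = fun i => ((w (k ^ e * i + j) : ℤ) : ℚ)}

/-- A sequence is k-regular if the ℚ-vector space generated by its k-kernel is
finite-dimensional. -/
def kRegular (k : ℕ) (w : ℕ → ℤ) : Prop :=
  FiniteDimensional ℚ (Submodule.span ℚ (kKernel k w))

/-- Extension of a sequence `ℕ → ℤ` to `ℤ → ℤ` by zero on negatives. -/
def extSeq (w : ℕ → ℤ) (n : ℤ) : ℤ := if 0 ≤ n then w n.toNat else 0

lemma extSeq_of_nonneg (w : ℕ → ℤ) {n : ℤ} (hn : 0 ≤ n) : extSeq w n = w n.toNat := if_pos hn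

lemma aux_toNat_emod (a : ℤ) (p : ℕ) (ha : 0 ≤ a) : (a % (p:ℤ)).toNat = a.toNat % p := by
  lift a to ℕ using ha
  rw [← Int.natCast_mod, Int.toNat_natCast, Int.toNat_natCast]

/-- A periodic sequence equals its value at the remainder. -/
lemma periodic_mod {p : ℕ} (u : ℕ → ℤ) (hu : ∀ i, u (i + p) = u i) (a : ℕ) :
    u a = u (a % p) := by
  conv_lhs => rw [← Nat.mod_add_div a p]
  generalize a / p = q
  induction q with
  | zero => simp
  | succ n ih =>
      rw [Nat.mul_succ, ← Nat.add_assoc, hu, ih]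

/-- Any sequence periodic with period `p` lies in the span of the `p` basic
periodic indicator sequences, provided those lie in `S`. -/
lemma periodic_mem_span {p : ℕ} (hp : 0 < p) (S : Set (ℕ → ℚ))
    (hS : ∀ t, t < p → (fun i : ℕ => if i % p = t then (1:ℚ) else 0) ∈ S)
    (g : ℕ → ℚ) (hg : ∀ i, g (i + p) = g i) :
    g ∈ Submodule.span ℚ S := by
  have hmod : ∀ a, g a = g (a % p) := by
    intro a
    conv_lhs => rw [← Nat.mod_add_div a p]
    generalize a / p = q
    induction q with
    | zero => simp
    | succ n ih => rw [Nat.mul_succ, ← Nat.add_assoc, hg, ih]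
  have hrepr : g = ∑ t ∈ Finset.range p, g t • (fun i : ℕ => if i % p = t then (1:ℚ) else 0) := by
    funext i
    rw [Finset.sum_apply]
    have hmem : i % p ∈ Finset.range p := Finset.mem_range.mpr (Nat.mod_lt _ hp)
    calc g i = g (i % p) := hmod i
    _ = ∑ t ∈ Finset.range p, if i % p = t then g t else 0 := by
        rw [Finset.sum_ite_eq (Finset.range p) (i % p) (fun t => g t), if_pos hmem]
    _ = _ := by
        apply Finset.sum_congr rfl
        intro t _
        by_cases h : i % p = t <;> simp [h]
  rw [hrepr]
  exact Submodule.sum_mem _ fun t ht =>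
    Submodule.smul_mem _ _ (Submodule.subset_span (hS t (Finset.mem_range.mp ht)))

/-- If `f` agrees with `g` from index 1 on, membership in the span transfers,
using the indicator of `{0}`. -/
lemma mem_span_of_eq_on_pos (S : Set (ℕ → ℚ)) (f g : ℕ → ℚ)
    (hg : g ∈ Submodule.span ℚ S)
    (h0 : (fun i : ℕ => if i = 0 then (1:ℚ) else 0) ∈ S)
    (hfg : ∀ i, 1 ≤ i → f i = g i) :
    f ∈ Submodule.span ℚ S := by
  have hrepr : f = g + (f 0 - g 0) • (fun i : ℕ => if i = 0 then (1:ℚ) else 0) := by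
    funext i
    cases i with
    | zero => simp
    | succ n => simp [hfg (n+1) (Nat.succ_le_succ (Nat.zero_le n))]
  rw [hrepr]
  exact Submodule.add_mem _ hg (Submodule.smul_mem _ _ (Submodule.subset_span h0))

theorem stmt11 (k ℓ : ℕ) (hk : 2 ≤ k) (hℓ : 1 ≤ ℓ)
    (d u : ℕ → ℤ) (hd : ∀ i, d (i + ℓ) = d i) (hu : ∀ i, u (i + k * ℓ) = u i)
    (r s : ℕ) (hrs : (0 : ℤ) ≤ (r : ℤ) - s + k - 1)
    (w : ℕ → ℤ)
    (hw1 : ∀ i : ℕ, ∀ m : ℕ, m ≤ k - 2 → w (k * i + r + m) = u (k * i + m))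
    (hw2 : ∀ i : ℕ, w (k * i + r + (k - 1)) = w (i + s) + d i) :
    kRegular k w := by
  classical
  -- parameters
  set D : ℕ := r + k + k * s with hD
  set E0 : ℕ := D + r + k with hE0
  -- the spanning set
  set S1 : Set (ℕ → ℚ) :=
    (fun p : ℕ × ℤ => fun i : ℕ => ((extSeq w ((k:ℤ)^p.1 * i + p.2) : ℤ) : ℚ)) ''
      (Set.Icc 0 E0 ×ˢ Set.Icc (-(D:ℤ)) ((k:ℤ)^E0 + D)) with hS1
  set S2 : Set (ℕ → ℚ) :=
    (fun t : ℕ => fun i : ℕ => if i % (k*ℓ) = t then (1:ℚ) else 0) '' (Set.Iio (k*ℓ)) with hS2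
  set S3 : Set (ℕ → ℚ) := {fun i : ℕ => if i = 0 then (1:ℚ) else 0} with hS3
  set S : Set (ℕ → ℚ) := S1 ∪ S2 ∪ S3 with hSdef
  have hSfin : S.Finite := by
    refine (Set.Finite.union (Set.Finite.union ?_ ?_) (Set.finite_singleton _))
    · exact Set.Finite.image _ (Set.Finite.prod (Set.finite_Icc _ _) (Set.finite_Icc _ _))
    · exact Set.Finite.image _ (Set.finite_Iio _)
  have hS2mem : ∀ t, t < k*ℓ → (fun i : ℕ => if i % (k*ℓ) = t then (1:ℚ) else 0) ∈ S :=
    fun t ht => Or.inl (Or.inr ⟨t, ht, rfl⟩)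
  have hS3mem : (fun i : ℕ => if i = 0 then (1:ℚ) else 0) ∈ S := Or.inr rfl
  have hkpos : (0:ℤ) < k := by exact_mod_cast Nat.lt_of_lt_of_le (by norm_num) hk
  have hkℓpos : 0 < k * ℓ := Nat.mul_pos (by omega) hℓ
  -- the key induction
  have key : ∀ e : ℕ, ∀ c : ℤ, -(D:ℤ) ≤ c → c ≤ (k:ℤ)^e + D →
      (fun i : ℕ => ((extSeq w ((k:ℤ)^e * i + c) : ℤ) : ℚ)) ∈ Submodule.span ℚ S := by
    intro e
    induction e using Nat.strong_induction_on with
    | _ e IH =>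
      intro c hc1 hc2
      by_cases he : e ≤ E0
      · -- base case: element of S1
        apply Submodule.subset_span
        refine Or.inl (Or.inl ⟨(e, c), ⟨⟨Nat.zero_le _, he⟩, hc1, ?_⟩, rfl⟩)
        calc c ≤ (k:ℤ)^e + D := hc2
        _ ≤ (k:ℤ)^E0 + D := by
            have : (k:ℤ)^e ≤ (k:ℤ)^E0 := pow_le_pow_right₀ (by omega) he
            omega
      · -- inductive case
        obtain ⟨e', rfl⟩ : ∃ e', e = e' + 1 := ⟨e - 1, by omega⟩
        have hbig : (D:ℤ) + r + k + 2 ≤ (k:ℤ)^(e'+1) := by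
          have h1 : e' + 1 + 1 ≤ 2 ^ (e'+1) := Nat.lt_two_pow_self (n := e'+1)
          have h2 : (2:ℕ)^(e'+1) ≤ k^(e'+1) := Nat.pow_le_pow_left hk _
          have h3 : D + r + k + 2 ≤ k ^ (e'+1) := by omega
          exact_mod_cast h3
        -- basic facts about n = k^e * i + c for i ≥ 1
        have hnbig : ∀ i : ℕ, 1 ≤ i → (r:ℤ) + k ≤ (k:ℤ)^(e'+1) * i + c := by
          intro i hi
          have h1 : (k:ℤ)^(e'+1) * 1 ≤ (k:ℤ)^(e'+1) * i := by
            apply mul_le_mul_of_nonneg_left _ (by positivity)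
            exact_mod_cast hi
          have := hc1
          omega
        have hrho : ∀ i : ℕ, ((k:ℤ)^(e'+1) * i + c - r) % k = (c - r) % k := by
          intro i
          have h1 : (k:ℤ)^(e'+1) * i + c - r = (c - (r:ℤ)) + (k:ℤ) * ((k:ℤ)^e' * i) := by
            rw [pow_succ]
            ring
          rw [h1, Int.add_mul_emod_self_left]
        set ρ : ℤ := (c - r) % k with hρdef
        have hρ0 : 0 ≤ ρ := Int.emod_nonneg _ (by omega)
        have hρk : ρ < k := Int.emod_lt_of_pos _ hkpos
        by_cases hcase : ρ ≤ (k:ℤ) - 2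
        · -- periodic case
          set g : ℕ → ℚ :=
            fun i => ((u ((((k:ℤ)^(e'+1) * i + c - r) % ((k*ℓ : ℕ):ℤ)).toNat) : ℤ) : ℚ) with hgdef
          have hgper : ∀ i, g (i + k*ℓ) = g i := by
            intro i
            have h1 : (k:ℤ)^(e'+1) * (↑(i + k*ℓ)) + c - r
                = ((k:ℤ)^(e'+1) * i + c - r) + ((k*ℓ:ℕ):ℤ) * ((k:ℤ)^(e'+1)) := by
              push_cast
              ring
            simp only [hgdef, h1, Int.add_mul_emod_self_left]
          have hgspan : g ∈ Submodule.span ℚ S :=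
            periodic_mem_span hkℓpos S hS2mem g hgper
          refine mem_span_of_eq_on_pos S _ g hgspan hS3mem ?_
          intro i hi
          set n : ℤ := (k:ℤ)^(e'+1) * i + c with hndef
          have hnr : (r:ℤ) + k ≤ n := hnbig i hi
          have hnr0 : (0:ℤ) ≤ n - r := by omega
          set q : ℤ := (n - r) / k with hqdef
          have hqm : (k:ℤ) * q + ρ = n - r := by
            have h := Int.mul_ediv_add_emod (n - r) k
            rw [← hqdef, hrho i] at h
            omega
          have hq0 : 0 ≤ q := Int.ediv_nonneg hnr0 (by omega)
          set Q : ℕ := q.toNat with hQdef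
          set M : ℕ := ρ.toNat with hMdef
          have hQq : (Q:ℤ) = q := Int.toNat_of_nonneg hq0
          have hMρ : (M:ℤ) = ρ := Int.toNat_of_nonneg hρ0
          have hMk : M ≤ k - 2 := by omega
          have hcast1 : ((k * Q + r + M : ℕ) : ℤ) = n := by
            push_cast [hQq, hMρ]
            omega
          have hcast2 : ((k * Q + M : ℕ) : ℤ) = n - r := by
            push_cast [hQq, hMρ]
            omega
          have hn0 : (0:ℤ) ≤ n := by omega
          have hntoNat : n.toNat = k * Q + r + M := by
            rw [← hcast1, Int.toNat_natCast]
          have hnrtoNat : (n - r).toNat = k * Q + M := by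
            rw [← hcast2, Int.toNat_natCast]
          have hstep : w n.toNat = u ((n - r).toNat) := by
            rw [hntoNat, hnrtoNat]
            exact hw1 Q M hMk
          show ((extSeq w n : ℤ) : ℚ) = g i
          rw [extSeq_of_nonneg w hn0, hstep, hgdef]
          have : u ((n - r).toNat) = u (((n - (r:ℤ)) % ((k*ℓ:ℕ):ℤ)).toNat) := by
            rw [aux_toNat_emod _ _ hnr0]
            exact periodic_mod u hu _
          rw [this]
        · -- recursive case: ρ = k - 1
          have hρeq : ρ = (k:ℤ) - 1 := by omega
          set c' : ℤ := (c - r) / k with hc'def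
          have hc'eq : (k:ℤ) * c' = c - r - ((k:ℤ) - 1) := by
            have h := Int.mul_ediv_add_emod (c - r) k
            rw [← hc'def] at h
            omega
          set c'' : ℤ := c' + s with hc''def
          have hDpos : (0:ℤ) ≤ D := by positivity
          have hc''low : -(D:ℤ) ≤ c'' := by
            rw [← mul_le_mul_iff_of_pos_left hkpos]
            have h1 : (k:ℤ) * c'' = c - r - ((k:ℤ) - 1) + k * s := by
              rw [hc''def]; rw [mul_add, hc'eq]
            have h2 : (k:ℤ) * (-(D:ℤ)) = -(k:ℤ)*D := by ring
            have hDex : (D:ℤ) = r + k + k * s := by push_cast [hD]; ring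
            nlinarith [hc1, hkpos]
          have hc''high : c'' ≤ (k:ℤ)^e' + D := by
            rw [← mul_le_mul_iff_of_pos_left hkpos]
            have h1 : (k:ℤ) * c'' = c - r - ((k:ℤ) - 1) + k * s := by
              rw [hc''def]; rw [mul_add, hc'eq]
            have h2 : (k:ℤ) * ((k:ℤ)^e' + D) = (k:ℤ)^(e'+1) + k * D := by
              rw [pow_succ]; ring
            have hDex : (D:ℤ) = r + k + k * s := by push_cast [hD]; ring
            nlinarith [hc2, hkpos]
          have hIH := IH e' (by omega) c'' hc''low hc''high
          set F : ℕ → ℚ := fun i : ℕ => ((extSeq w ((k:ℤ)^e' * i + c'') : ℤ) : ℚ) with hFdef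
          set G : ℕ → ℚ :=
            fun i => ((d ((((k:ℤ)^e' * i + c') % ((ℓ : ℕ):ℤ)).toNat) : ℤ) : ℚ) with hGdef
          have hGper : ∀ i, G (i + k*ℓ) = G i := by
            intro i
            have h1 : (k:ℤ)^e' * (↑(i + k*ℓ)) + c'
                = ((k:ℤ)^e' * i + c') + ((ℓ:ℕ):ℤ) * ((k:ℤ)^e' * k) := by
              push_cast
              ring
            simp only [hGdef, h1, Int.add_mul_emod_self_left]
          have hGspan : G ∈ Submodule.span ℚ S :=
            periodic_mem_span hkℓpos S hS2mem G hGper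
          refine mem_span_of_eq_on_pos S _ (F + G)
            (Submodule.add_mem _ hIH hGspan) hS3mem ?_
          intro i hi
          set n : ℤ := (k:ℤ)^(e'+1) * i + c with hndef
          have hnr : (r:ℤ) + k ≤ n := hnbig i hi
          set q : ℤ := (k:ℤ)^e' * i + c' with hqdef
          have hqn : n = (k:ℤ) * q + r + ((k:ℤ) - 1) := by
            rw [hqdef, mul_add, hc'eq, ← mul_assoc, ← pow_succ']
            ring
          have hq0 : 0 ≤ q := by
            rw [← mul_nonneg_iff_of_pos_left hkpos]
            omega
          set Q : ℕ := q.toNat with hQdef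
          have hQq : (Q:ℤ) = q := Int.toNat_of_nonneg hq0
          have hk1 : ((k - 1 : ℕ) : ℤ) = (k:ℤ) - 1 := by omega
          have hcast1 : ((k * Q + r + (k-1) : ℕ) : ℤ) = n := by
            push_cast [hQq, hk1]
            omega
          have hn0 : (0:ℤ) ≤ n := by omega
          have hntoNat : n.toNat = k * Q + r + (k-1) := by
            rw [← hcast1, Int.toNat_natCast]
          have hstep : w n.toNat = w (Q + s) + d Q := by
            rw [hntoNat]
            exact hw2 Q
          show ((extSeq w n : ℤ) : ℚ) = (F + G) i
          rw [extSeq_of_nonneg w hn0, hstep]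
          have hqs : (0:ℤ) ≤ q + s := by omega
          have hF : (F i : ℚ) = ((w (Q + s) : ℤ) : ℚ) := by
            rw [hFdef]
            show ((extSeq w ((k:ℤ)^e' * i + c'') : ℤ) : ℚ) = _
            have hq'' : (k:ℤ)^e' * i + c'' = q + s := by
              rw [hc''def, hqdef]; ring
            rw [hq'', extSeq_of_nonneg w hqs]
            congr 2
            omega
          have hG : (G i : ℚ) = ((d Q : ℤ) : ℚ) := by
            rw [hGdef]
            show ((d (((q % ((ℓ:ℕ):ℤ)).toNat)) : ℤ) : ℚ) = _
            rw [aux_toNat_emod _ _ hq0]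
            rw [← periodic_mod d hd Q]
          rw [Pi.add_apply, hF, hG]
          push_cast
          ring
  -- conclude: the kernel is inside the span of S
  have hker : kKernel k w ⊆ Submodule.span ℚ S := by
    rintro f ⟨e, j, hj, rfl⟩
    have heq : (fun i : ℕ => ((w (k^e * i + j) : ℤ) : ℚ))
        = fun i : ℕ => ((extSeq w ((k:ℤ)^e * i + (j:ℤ)) : ℤ) : ℚ) := by
      funext i
      have h1 : (k:ℤ)^e * i + (j:ℤ) = ((k^e * i + j : ℕ) : ℤ) := by push_cast; ring
      rw [h1, extSeq_of_nonneg w (by positivity), Int.toNat_natCast]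
    rw [heq]
    refine key e j (by omega) ?_
    have : (j:ℤ) < (k:ℤ)^e := by exact_mod_cast hj
    omega
  have hle : Submodule.span ℚ (kKernel k w) ≤ Submodule.span ℚ S :=
    Submodule.span_le.mpr hker
  have : FiniteDimensional ℚ (Submodule.span ℚ S) :=
    FiniteDimensional.span_of_finite ℚ hSfin
  exact Submodule.finiteDimensional_of_le hle
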